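/- Let A be a finitely generated commutative algebra over an algebraically closed field k, and M a finitely generated A-module such that for every maximal ideal m of A, the fiber M/mM has k-dimension exactly n. If A is reduced, then M is a projective A-module of constant rank n. -/

import Mathlib

section aux

open Submodule Function

variable {k A : Type*} [Field k] [CommRing A] [Algebra k A]

lemma aux_smul_zero {m' : Ideal A} {M' : Type*} [AddCommGroup M'] [Module A M']
    {a : A} (ha : a ∈ m') (z : M' ⧸ (m' • ⊤ : Submodule A M')) : a • z = 0 := by
  obtain ⟨w, rfl⟩ := Submodule.Quotient.mk_surjective _ z
  rw [← Submodule.Quotient.mk_smul, Submodule.Quotient.mk_eq_zero]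
  exact Submodule.smul_mem_smul ha trivial

lemma aux_smul_congr {m' : Ideal A}
    (hs : Surjective (algebraMap k (A ⧸ m'))) {M' : Type*} [AddCommGroup M'] [Module A M']
    [Module k M'] [IsScalarTower k A M'] (a : A) (z : M' ⧸ (m' • ⊤ : Submodule A M')) :
    ∃ c : k, a • z = c • z := by
  obtain ⟨c, hc⟩ := hs (Ideal.Quotient.mk m' a)
  refine ⟨c, ?_⟩
  have hm : a - algebraMap k A c ∈ m' := by
    rw [← Ideal.Quotient.eq_zero_iff_mem, map_sub, ← hc,
      IsScalarTower.algebraMap_apply k A (A ⧸ m')]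
    simp [Ideal.Quotient.algebraMap_eq]
  have h0 : (a - algebraMap k A c) • z = 0 := aux_smul_zero hm z
  have h2 : (algebraMap k A c) • z = c • z := algebraMap_smul A c z
  calc a • z = (a - algebraMap k A c) • z + (algebraMap k A c) • z := by
        rw [← add_smul, sub_add_cancel]
    _ = c • z := by rw [h0, zero_add, h2]

lemma aux_span {m' : Ideal A}
    (hs : Surjective (algebraMap k (A ⧸ m'))) {M' : Type*} [AddCommGroup M'] [Module A M']
    [Module k M'] [IsScalarTower k A M'] {S : Set (M' ⧸ (m' • ⊤ : Submodule A M'))}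
    (hS : Submodule.span A S = ⊤) : Submodule.span k S = ⊤ := by
  rw [eq_top_iff]
  intro z hz0
  clear hz0
  have hz : z ∈ Submodule.span A S := by rw [hS]; trivial
  induction hz using Submodule.span_induction with
  | mem w hw => exact Submodule.subset_span hw
  | zero => exact Submodule.zero_mem _
  | add u v _ _ hu hv => exact Submodule.add_mem _ hu hv
  | smul a u _ hu =>
    obtain ⟨c, hc⟩ := aux_smul_congr hs a u
    rw [hc]
    exact Submodule.smul_mem _ c hu

lemma aux_finite {m' : Ideal A}
    (hs : Surjective (algebraMap k (A ⧸ m'))) (M' : Type*) [AddCommGroup M'] [Module A M']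
    [Module k M'] [IsScalarTower k A M'] [Module.Finite A M'] :
    Module.Finite k (M' ⧸ (m' • ⊤ : Submodule A M')) := by
  obtain ⟨s, hsp⟩ := Module.finite_def.mp
    (inferInstance : Module.Finite A (M' ⧸ (m' • ⊤ : Submodule A M')))
  exact ⟨⟨s, aux_span hs hsp⟩⟩

lemma aux_res [IsAlgClosed k] [Algebra.FiniteType k A] {m' : Ideal A} (hm' : m'.IsMaximal) :
    Surjective (algebraMap k (A ⧸ m')) := by
  haveI := hm'
  haveI : IsJacobsonRing A := isJacobsonRing_of_finiteType (A := k)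
  haveI : Algebra.FiniteType k (A ⧸ m') :=
    Algebra.FiniteType.of_surjective (Ideal.Quotient.mkₐ k m')
      (Ideal.Quotient.mkₐ_surjective k m')
  letI : Field (A ⧸ m') := Ideal.Quotient.field m'
  haveI : Module.Finite k (A ⧸ m') := finite_of_finite_type_of_isJacobsonRing k _
  haveI : Algebra.IsIntegral k (A ⧸ m') := Algebra.IsIntegral.of_finite k _
  exact IsAlgClosed.algebraMap_bijective_of_isIntegral.2

end aux

set_option maxHeartbeats 1000000 in
/-- Hartshorne, Exercise II.5.8(c): if `A` is a reduced finitely generated commutative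
algebra over an algebraically closed field `k` and `M` a finitely generated `A`-module
such that every fiber `M/mM` at a maximal ideal `m` has `k`-dimension exactly `n`, then
`M` is projective of constant rank `n` (its localization at every prime is free of
rank `n`). -/
theorem projective_of_constant_fiber_dim (k : Type*) [Field k] [IsAlgClosed k]
    (A : Type*) [CommRing A] [Algebra k A] [Algebra.FiniteType k A] [IsReduced A]
    (M : Type*) [AddCommGroup M] [Module A M] [Module.Finite A M]
    [Module k M] [IsScalarTower k A M] (n : ℕ)
    (hfib : ∀ m : Ideal A, m.IsMaximal →
      Module.finrank k (M ⧸ (m • ⊤ : Submodule A M)) = n) :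
    Module.Projective A M ∧
      ∀ (p : Ideal A) (_ : p.IsPrime),
        haveI : p.IsPrime := ‹_›
        Module.Free (Localization.AtPrime p) (LocalizedModule p.primeCompl M) ∧
        Module.finrank (Localization.AtPrime p) (LocalizedModule p.primeCompl M) = n := by
  classical
  haveI : IsNoetherianRing A := Algebra.FiniteType.isNoetherianRing k A
  haveI : IsJacobsonRing A := isJacobsonRing_of_finiteType (A := k)
  have key : ∀ (p : Ideal A) (hp : p.IsPrime),
      haveI : p.IsPrime := hp
      Nonempty ((Fin n → Localization.AtPrime p) ≃ₗ[Localization.AtPrime p]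
        LocalizedModule p.primeCompl M) := by
    intro p hp
    obtain ⟨m, hm, hpm⟩ := p.exists_le_maximal hp.ne_top
    haveI : Module.Finite k (M ⧸ (m • ⊤ : Submodule A M)) :=
      aux_finite (aux_res (k := k) hm) M
    let b : Module.Basis (Fin n) k (M ⧸ (m • ⊤ : Submodule A M)) :=
      Module.finBasisOfFinrankEq k _ (hfib m hm)
    choose x hx using fun i => Submodule.Quotient.mk_surjective (m • ⊤ : Submodule A M) (b i)
    let φ : (Fin n → A) →ₗ[A] M := Fintype.linearCombination A x
    have hφ : ∀ c, φ c = ∑ i, c i • x i := fun c => Fintype.linearCombination_apply A x c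
    have hsup : LinearMap.range φ ⊔ (m • ⊤ : Submodule A M) = ⊤ := by
      rw [Submodule.eq_top_iff']
      intro y
      set c := b.repr (Submodule.Quotient.mk y) with hcdef
      have hz : Submodule.Quotient.mk (φ fun i => algebraMap k A (c i)) =
          (Submodule.Quotient.mk y : M ⧸ (m • ⊤ : Submodule A M)) := by
        have : (m • ⊤ : Submodule A M).mkQ (φ fun i => algebraMap k A (c i)) =
            ∑ i, c i • b i := by
          rw [hφ, map_sum]
          refine Finset.sum_congr rfl fun i _ => ?_
          rw [map_smul, algebraMap_smul]
          congr 1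
          exact (Submodule.mkQ_apply _ _).trans (hx i)
        simpa [hcdef, Module.Basis.sum_repr] using this
      have hmem : y - φ (fun i => algebraMap k A (c i)) ∈ (m • ⊤ : Submodule A M) :=
        (Submodule.Quotient.eq _).mp hz.symm
      have hy : y = φ (fun i => algebraMap k A (c i)) +
          (y - φ (fun i => algebraMap k A (c i))) := by abel
      rw [hy]
      exact Submodule.add_mem _ (Submodule.mem_sup_left ⟨_, rfl⟩)
        (Submodule.mem_sup_right hmem)
    -- Nakayama
    have htop : (⊤ : Submodule A (M ⧸ LinearMap.range φ)) ≤
        m • (⊤ : Submodule A (M ⧸ LinearMap.range φ)) := by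
      have h2 : Submodule.map (LinearMap.range φ).mkQ (LinearMap.range φ) = ⊥ :=
        le_bot_iff.mp (Submodule.map_le_iff_le_comap.mpr
          (by rw [Submodule.comap_bot, Submodule.ker_mkQ]))
      have h1 : Submodule.map (LinearMap.range φ).mkQ
          (LinearMap.range φ ⊔ (m • ⊤ : Submodule A M)) = ⊤ := by
        rw [hsup, Submodule.map_top, Submodule.range_mkQ]
      rw [Submodule.map_sup, Submodule.map_smul'', h2, bot_sup_eq, Submodule.map_top,
        Submodule.range_mkQ] at h1
      exact le_of_eq h1.symm
    obtain ⟨r, hr1, hr0⟩ := Submodule.exists_sub_one_mem_and_smul_eq_zero_of_fg_of_le_smul m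
      (⊤ : Submodule A (M ⧸ LinearMap.range φ)) (Module.finite_def.mp inferInstance) htop
    have hrm : r ∉ m := fun h =>
      hm.ne_top ((Ideal.eq_top_iff_one m).mpr (by simpa using m.sub_mem h hr1))
    have hrp : r ∉ p := fun h => hrm (hpm h)
    have hrφ : ∀ y : M, ∃ c, φ c = r • y := by
      intro y
      have h0 : (LinearMap.range φ).mkQ (r • y) = 0 := by
        rw [map_smul]
        exact hr0 _ Submodule.mem_top
      have : r • y ∈ LinearMap.range φ := by
        rwa [← Submodule.ker_mkQ (LinearMap.range φ), LinearMap.mem_ker]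
      obtain ⟨c, hc⟩ := this
      exact ⟨c, hc⟩
    have hker : ∀ v : Fin n → A, φ v = 0 → ∀ i, r * v i = 0 := by
      intro v hv i
      have hall : ∀ m' : Ideal A, m'.IsMaximal → r * v i ∈ m' := by
        intro m' hm'
        by_cases hrm' : r ∈ m'
        · exact Ideal.mul_mem_right _ _ hrm'
        have hres' := aux_res (k := k) hm'
        have hcom : (m' • ⊤ : Submodule A (Fin n → A)) ≤
            Submodule.comap φ (m' • ⊤ : Submodule A M) := by
          rw [← Submodule.map_le_iff_le_comap, Submodule.map_smul'']
          exact Submodule.smul_le.mpr fun a ha z hz => Submodule.smul_mem_smul ha trivial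
        set φb := Submodule.mapQ _ _ φ hcom with hφbdef
        have hφb : ∀ w : Fin n → A, φb (Submodule.Quotient.mk w) =
            Submodule.Quotient.mk (φ w) := fun w => Submodule.mapQ_apply _ _ φ w
        have hsurjb : Function.Surjective φb := by
          intro z
          obtain ⟨y, rfl⟩ := Submodule.Quotient.mk_surjective _ z
          obtain ⟨a, j, hj, haj⟩ := hm'.exists_inv hrm'
          obtain ⟨c, hc⟩ := hrφ y
          refine ⟨Submodule.Quotient.mk (a • c), ?_⟩
          rw [hφb, map_smul, hc, Submodule.Quotient.eq]
          have he : a • r • y - y = -(j • y) := by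
            rw [smul_smul, show a * r = 1 - j by linear_combination haj, sub_smul, one_smul]
            abel
          rw [he]
          exact Submodule.neg_mem _ (Submodule.smul_mem_smul hj trivial)
        haveI hfinP : Module.Finite k ((Fin n → A) ⧸ (m' • ⊤ : Submodule A (Fin n → A))) :=
          aux_finite hres' _
        set vst : Fin n → (Fin n → A) := fun i j => if i = j then 1 else 0 with hvstdef
        have hPspan : Submodule.span k
            (Set.range fun i' => (m' • ⊤ : Submodule A (Fin n → A)).mkQ (vst i')) = ⊤ := by
          apply aux_span hres'
          rw [Submodule.eq_top_iff']
          intro z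
          obtain ⟨w, rfl⟩ := Submodule.Quotient.mk_surjective _ z
          have hw : (Submodule.Quotient.mk w :
              (Fin n → A) ⧸ (m' • ⊤ : Submodule A (Fin n → A)))
              = ∑ i', w i' • (m' • ⊤ : Submodule A (Fin n → A)).mkQ (vst i') := by
            have := congrArg (m' • ⊤ : Submodule A (Fin n → A)).mkQ (pi_eq_sum_univ w)
            rw [map_sum] at this
            simpa [vst] using this
          rw [hw]
          exact Submodule.sum_mem _ fun i' _ =>
            Submodule.smul_mem _ _ (Submodule.subset_span ⟨i', rfl⟩)
        have hPn : Module.finrank k ((Fin n → A) ⧸ (m' • ⊤ : Submodule A (Fin n → A))) ≤ n := by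
          have h1 := finrank_span_le_card (R := k)
            (Set.range fun i' => (m' • ⊤ : Submodule A (Fin n → A)).mkQ (vst i'))
          rw [hPspan, finrank_top] at h1
          refine h1.trans ?_
          rw [Set.toFinset_range]
          exact Finset.card_image_le.trans (by simp)
        set φk := φb.restrictScalars k with hφkdef
        have hsurjk : Function.Surjective φk := hsurjb
        have hrange : LinearMap.range φk = ⊤ := LinearMap.range_eq_top.mpr hsurjk
        have hrn := LinearMap.finrank_range_add_finrank_ker φk
        rw [hrange, finrank_top, hfib m' hm'] at hrn
        have hker0 : Module.finrank k (LinearMap.ker φk) = 0 := by omega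
        have hkerbot : LinearMap.ker φk = ⊥ := Submodule.finrank_eq_zero.mp hker0
        have hvz : (Submodule.Quotient.mk v :
            (Fin n → A) ⧸ (m' • ⊤ : Submodule A (Fin n → A))) = 0 := by
          have hmem : Submodule.Quotient.mk v ∈ LinearMap.ker φk := by
            rw [LinearMap.mem_ker]
            show φb (Submodule.Quotient.mk v) = 0
            rw [hφb, hv]
            exact congrArg _ rfl |>.trans (Submodule.Quotient.mk_eq_zero _ |>.mpr
              (Submodule.zero_mem _))
          rwa [hkerbot, Submodule.mem_bot] at hmem
        have hvm : v ∈ (m' • ⊤ : Submodule A (Fin n → A)) :=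
          (Submodule.Quotient.mk_eq_zero _).mp hvz
        have hvi : v i ∈ m' := by
          have h3 : v i ∈ Submodule.map (LinearMap.proj i : (Fin n → A) →ₗ[A] A)
              (m' • ⊤ : Submodule A (Fin n → A)) := ⟨v, hvm, rfl⟩
          rw [Submodule.map_smul''] at h3
          have hle : m' • Submodule.map (LinearMap.proj i : (Fin n → A) →ₗ[A] A)
              (⊤ : Submodule A (Fin n → A)) ≤ (m' : Submodule A A) :=
            Submodule.smul_le.mpr fun a ha y _ => by
              simpa [smul_eq_mul] using Ideal.mul_mem_right y m' ha
          exact hle h3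
        exact Ideal.mul_mem_left _ _ hvi
      have hjac : r * v i ∈ (⊥ : Ideal A).jacobson := by
        rw [Ideal.jacobson]
        exact Submodule.mem_sInf.mpr fun J hJ => hall J hJ.2
      have hrad : (⊥ : Ideal A).IsRadical :=
        Ideal.radical_eq_iff.mp (by simpa [nilradical] using nilradical_eq_zero A)
      rwa [(inferInstance : IsJacobsonRing A).out hrad, Ideal.mem_bot] at hjac
    -- the localized map is an isomorphism
    set R' := Localization.AtPrime p with hR'def
    set mkL := LocalizedModule.mkLinearMap p.primeCompl M with hmkLdef
    set ψ : (Fin n → R') →ₗ[R'] LocalizedModule p.primeCompl M :=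
      Fintype.linearCombination R' (fun i => mkL (x i)) with hψdef
    have hψap : ∀ c : Fin n → R', ψ c = ∑ i, c i • mkL (x i) :=
      fun c => Fintype.linearCombination_apply R' _ c
    have hmk : ∀ c : Fin n → A, ψ (fun i => algebraMap A R' (c i)) = mkL (φ c) := by
      intro c
      rw [hψap, hφ, map_sum]
      refine Finset.sum_congr rfl fun i _ => ?_
      rw [map_smul, algebraMap_smul]
    have hsurjψ : Function.Surjective ψ := by
      intro z
      induction z using LocalizedModule.induction_on with
      | _ y s =>
        obtain ⟨c, hc⟩ := hrφ y
        refine ⟨Localization.mk 1 (s * ⟨r, hrp⟩) • (fun i => algebraMap A R' (c i)), ?_⟩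
        rw [map_smul, hmk c, hc]
        show Localization.mk 1 (s * ⟨r, hrp⟩) • LocalizedModule.mk (r • y) 1 =
          LocalizedModule.mk y s
        rw [LocalizedModule.mk_smul_mk, one_smul, mul_one, mul_comm]
        exact LocalizedModule.mk_cancel_common_left ⟨r, hrp⟩ s y
    have hinjψ : Function.Injective ψ := by
      rw [injective_iff_map_eq_zero]
      intro c hc0
      obtain ⟨t0, ht0⟩ := IsLocalization.exist_integer_multiples p.primeCompl Finset.univ c
      have hex : ∀ i : Fin n, ∃ a : A, algebraMap A R' a = (t0 : A) • c i :=
        fun i => ht0 i (Finset.mem_univ i)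
      choose a ha using hex
      have h1 : ψ (fun i => algebraMap A R' (a i)) = 0 := by
        have he : (fun i => algebraMap A R' (a i)) = algebraMap A R' (t0 : A) • c := by
          funext i
          rw [ha i, Pi.smul_apply, Algebra.smul_def, smul_eq_mul]
        rw [he, map_smul, hc0, smul_zero]
      rw [hmk a] at h1
      have h2 : LocalizedModule.mk (φ a) (1 : p.primeCompl) = LocalizedModule.mk 0 1 := by
        rw [LocalizedModule.zero_mk]
        exact h1
      rw [LocalizedModule.mk_eq] at h2
      obtain ⟨t, ht⟩ := h2
      simp only [one_smul, smul_zero] at ht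
      have h3 : φ ((t : A) • a) = 0 := by
        rw [map_smul]
        show (t : A) • φ a = 0
        rw [← Submonoid.smul_def, ht]
      have h4 := hker _ h3
      funext i
      have h5 : r * ((t : A) * a i) = 0 := by
        have := h4 i
        simpa [smul_eq_mul] using this
      have h6 : algebraMap A R' (a i) = 0 := by
        have h7 := congrArg (algebraMap A R') h5
        rw [map_mul, map_mul, map_zero] at h7
        have hu1 : IsUnit (algebraMap A R' r) := IsLocalization.map_units (M := p.primeCompl) R' ⟨r, hrp⟩
        have hu2 : IsUnit (algebraMap A R' (t : A)) := IsLocalization.map_units R' t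
        rw [hu1.mul_right_eq_zero, hu2.mul_right_eq_zero] at h7
        exact h7
      rw [ha i, Algebra.smul_def] at h6
      have hu3 : IsUnit (algebraMap A R' (t0 : A)) := IsLocalization.map_units R' t0
      rw [hu3.mul_right_eq_zero] at h6
      exact h6
    exact ⟨LinearEquiv.ofBijective ψ ⟨hinjψ, hsurjψ⟩⟩
  constructor
  · haveI : Module.FinitePresentation A M := Module.finitePresentation_of_finite A M
    apply Module.projective_of_localization_maximal
    intro I hI
    obtain ⟨e⟩ := key I hI.isPrime
    haveI : Module.Free (Localization.AtPrime I) (LocalizedModule I.primeCompl M) :=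
      Module.Free.of_equiv e
    infer_instance
  · intro p hp
    obtain ⟨e⟩ := key p hp
    haveI : Module.Free (Localization.AtPrime p) (LocalizedModule p.primeCompl M) :=
      Module.Free.of_equiv e
    refine ⟨inferInstance, ?_⟩
    rw [e.symm.finrank_eq, Module.finrank_pi, Fintype.card_fin]
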